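/- Let n ≥ 1, let A be an n×n real matrix, α ∈ ℝ^n, and let Y : ℕ → ℝ^n satisfy Y_x = A·Y_{x-1} + α for all x ≥ 1. Write (λ − 1)·(characteristic polynomial of A) = λ^{n+1} + c*_1·λ^n + c*_2·λ^{n-1} + ... + c*_{n+1}, i.e. c*_j is the coefficient of λ^{n+1-j} in the polynomial (λ − 1)·det(λI − A). Then for every x ≥ n+1, Y_x = −(c*_1·Y_{x-1} + c*_2·Y_{x-2} + ... + c*_{n+1}·Y_{x-n-1}). In particular each coordinate sequence satisfies a homogeneous linear recurrence of order n+1 with constant coefficients in which the absolute term α no longer appears. -/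

import Mathlib

open Polynomial Matrix Finset

private lemma sum_mulVec'' {n : ℕ} {ι : Type*} (s : Finset ι)
    (M : ι → Matrix (Fin n) (Fin n) ℝ) (v : Fin n → ℝ) :
    (∑ k ∈ s, M k) *ᵥ v = ∑ k ∈ s, (M k) *ᵥ v := by
  ext i
  simp only [Matrix.mulVec, dotProduct, Matrix.sum_apply, Finset.sum_mul,
    Finset.sum_apply]
  exact Finset.sum_comm

private lemma unfold_aux {n : ℕ} (A : Matrix (Fin n) (Fin n) ℝ) (α : Fin n → ℝ)
    (Y : ℕ → Fin n → ℝ) (hY : ∀ x, 1 ≤ x → Y x = A.mulVec (Y (x - 1)) + α)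
    (b : ℕ) : ∀ k, Y (b + k) = (A ^ k) *ᵥ Y b + (∑ i ∈ Finset.range k, A ^ i) *ᵥ α := by
  intro k
  induction k with
  | zero => simp
  | succ k ih =>
      have h1 : Y (b + (k+1)) = A *ᵥ Y (b + k) + α := by
        have := hY (b + k + 1) (by omega)
        simpa [← add_assoc] using this
      rw [h1, ih, Matrix.mulVec_add, Matrix.mulVec_mulVec, Matrix.mulVec_mulVec,
        ← pow_succ', geom_sum_succ, Matrix.add_mulVec, Matrix.one_mulVec]
      abel

/-- If `Y x = A ⬝ Y (x-1) + α` for all `x ≥ 1`, and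
`(λ - 1) · det(λ I - A) = λ^{n+1} + c*₁ λ^n + ⋯ + c*_{n+1}`, i.e. `c*ⱼ` is the coefficient of
`λ^{n+1-j}` in `(λ - 1) · charpoly A`, then for every `x ≥ n+1`,
`Y x = -(c*₁ • Y (x-1) + c*₂ • Y (x-2) + ⋯ + c*_{n+1} • Y (x-n-1))`. -/
theorem affine_matrix_recurrence_to_regular (n : ℕ) (hn : 1 ≤ n)
    (A : Matrix (Fin n) (Fin n) ℝ) (α : Fin n → ℝ) (Y : ℕ → Fin n → ℝ)
    (hY : ∀ x, 1 ≤ x → Y x = A.mulVec (Y (x - 1)) + α) :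
    ∀ x, n + 1 ≤ x →
      Y x = -(∑ j ∈ Finset.Icc 1 (n + 1),
        (((Polynomial.X - 1) * A.charpoly).coeff (n + 1 - j)) • Y (x - j)) := by
  intro x hx
  set p := A.charpoly with hp
  set q := (X - 1 : ℝ[X]) * p with hq
  have hpmonic : p.Monic := A.charpoly_monic
  have hpdeg : p.natDegree = n := by rw [hp, A.charpoly_natDegree_eq_dim, Fintype.card_fin]
  have hx1monic : (X - 1 : ℝ[X]).Monic := by
    simpa using monic_X_sub_C (1 : ℝ)
  have hqmonic : q.Monic := hx1monic.mul hpmonic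
  have hX1deg : (X - 1 : ℝ[X]).natDegree = 1 := by
    simpa using natDegree_X_sub_C (1 : ℝ)
  have hqdeg : q.natDegree = n + 1 := by
    rw [hq, hx1monic.natDegree_mul hpmonic, hpdeg, hX1deg]
    omega
  -- Cayley-Hamilton
  have hCH : aeval A p = 0 := Matrix.aeval_self_charpoly A
  have hq0 : aeval A q = 0 := by rw [hq, _root_.map_mul, hCH, mul_zero]
  -- polynomial identity: S = p
  have hS : (∑ k ∈ Finset.range (n + 2), C (q.coeff k) * ∑ i ∈ Finset.range k, (X:ℝ[X]) ^ i) = p := by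
    have hXne : (X - 1 : ℝ[X]) ≠ 0 := hx1monic.ne_zero
    apply mul_right_cancel₀ hXne
    rw [Finset.sum_mul]
    have h1 : ∀ k ∈ Finset.range (n+2),
        C (q.coeff k) * (∑ i ∈ Finset.range k, (X:ℝ[X]) ^ i) * (X - 1)
        = C (q.coeff k) * X ^ k - C (q.coeff k) := by
      intro k _
      rw [mul_assoc, geom_sum_mul, mul_sub, mul_one]
    rw [Finset.sum_congr rfl h1, Finset.sum_sub_distrib]
    have h2 : (∑ k ∈ Finset.range (n+2), C (q.coeff k) * X ^ k) = q := by
      conv_rhs => rw [q.as_sum_range' (n+2) (by omega)]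
      simp [Polynomial.C_mul_X_pow_eq_monomial]
    have h3 : (∑ k ∈ Finset.range (n+2), C (q.coeff k)) = C (q.eval 1) := by
      rw [eval_eq_sum_range' (by omega : q.natDegree < n + 2)]
      simp [map_sum]
    have h4 : q.eval 1 = 0 := by simp [hq]
    rw [h2, h3, h4, map_zero, sub_zero, hq, mul_comm]
  -- evaluate S at A
  have hSA : (∑ k ∈ Finset.range (n + 2), q.coeff k • ∑ i ∈ Finset.range k, A ^ i) = 0 := by
    have := congrArg (aeval A) hS
    rw [hCH, map_sum] at this
    convert this using 2 with k hk
    rw [_root_.map_mul, aeval_C, map_sum]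
    simp [Algebra.smul_def]
  have hqA : (∑ k ∈ Finset.range (n + 2), q.coeff k • A ^ k) = 0 := by
    have := aeval_eq_sum_range' (by omega : q.natDegree < n + 2) (x := A)
    rw [hq0] at this
    exact this.symm
  -- main sum vanishes
  set b := x - (n + 1) with hb
  have key : (∑ k ∈ Finset.range (n + 2), q.coeff k • Y (b + k)) = 0 := by
    have h1 : ∀ k ∈ Finset.range (n+2),
        q.coeff k • Y (b + k)
        = q.coeff k • ((A ^ k) *ᵥ Y b) + q.coeff k • ((∑ i ∈ Finset.range k, A ^ i) *ᵥ α) := by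
      intro k _
      rw [unfold_aux A α Y hY b k, smul_add]
    rw [Finset.sum_congr rfl h1, Finset.sum_add_distrib]
    have e1 : (∑ k ∈ Finset.range (n+2), q.coeff k • ((A ^ k) *ᵥ Y b))
        = (∑ k ∈ Finset.range (n+2), q.coeff k • A ^ k) *ᵥ Y b := by
      rw [sum_mulVec'']
      exact Finset.sum_congr rfl fun k _ => by rw [Matrix.smul_mulVec]
    have e2 : (∑ k ∈ Finset.range (n+2), q.coeff k • ((∑ i ∈ Finset.range k, A ^ i) *ᵥ α))
        = (∑ k ∈ Finset.range (n+2), q.coeff k • ∑ i ∈ Finset.range k, A ^ i) *ᵥ α := by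
      rw [sum_mulVec'']
      exact Finset.sum_congr rfl fun k _ => by rw [Matrix.smul_mulVec]
    rw [e1, e2, hqA, hSA, Matrix.zero_mulVec, Matrix.zero_mulVec, add_zero]
  -- now rearrange
  rw [Finset.sum_range_succ] at key
  have htop : q.coeff (n + 1) = 1 := by
    have := hqmonic.coeff_natDegree
    rwa [hqdeg] at this
  have hbx : b + (n + 1) = x := by omega
  rw [htop, one_smul, hbx] at key
  have hrefl : (∑ j ∈ Finset.Icc 1 (n + 1), q.coeff (n + 1 - j) • Y (x - j))
      = ∑ k ∈ Finset.range (n + 1), q.coeff k • Y (b + k) := by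
    apply Finset.sum_bij' (i := fun j _ => n + 1 - j) (j := fun k _ => n + 1 - k)
    · intro a ha
      simp only [Finset.mem_Icc] at ha
      simp only [Finset.mem_range]
      omega
    · intro a ha
      simp only [Finset.mem_range] at ha
      simp only [Finset.mem_Icc]
      omega
    · intro a ha
      simp only [Finset.mem_Icc] at ha
      omega
    · intro a ha
      simp only [Finset.mem_range] at ha
      omega
    · intro a ha
      simp only [Finset.mem_Icc] at ha
      have hxa : x - a = b + (n + 1 - a) := by omega
      rw [hxa]
  rw [hrefl]
  exact eq_neg_of_add_eq_zero_right key
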